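/- In a flattened parking function, every run except possibly the last run has length at least 2. -/

import Mathlib

namespace FlatPF

/-- Decomposition of a word into maximal weakly increasing runs. -/
def runs : List ℕ → List (List ℕ)
  | [] => []
  | a :: l =>
    match runs l with
    | [] => [[a]]
    | [] :: rs => [a] :: rs
    | (b :: t) :: rs => if a ≤ b then (a :: b :: t) :: rs else [a] :: (b :: t) :: rs

/-- The number of maximal weakly increasing runs of a word. -/
def numRuns (w : List ℕ) : ℕ := (runs w).length

/-- A word is flattened if the leading values of its runs are weakly increasing. -/
def IsFlattened (w : List ℕ) : Prop :=
  List.Chain' (· ≤ ·) ((runs w).map (fun r => r.headD 0))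

/-- A word is a parking function: entries in `[m]` and the weakly increasing
rearrangement `(a'_1, …, a'_m)` satisfies `a'_i ≤ i`. -/
def IsPF (w : List ℕ) : Prop :=
  (∀ x ∈ w, 1 ≤ x ∧ x ≤ w.length) ∧
  ∀ i < w.length, (w.mergeSort (· ≤ ·)).getD i 0 ≤ i + 1

/-- `w` is obtained by inserting the elements of the multiset `S` into some
permutation of `[n]`, keeping the letters of the permutation in relative order. -/
def IsInsertion (S : Multiset ℕ) (n : ℕ) (w : List ℕ) : Prop :=
  (↑w : Multiset ℕ) = ↑(List.range' 1 n) + S ∧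
  ∃ p : List ℕ, p.Perm (List.range' 1 n) ∧ p.Sublist w

/-- Flattened `S`-insertion parking functions of order `n`. -/
def flatIns (S : Multiset ℕ) (n : ℕ) : Set (List ℕ) :=
  {w | IsInsertion S n w ∧ IsFlattened w}

/-- Flattened `S`-insertion parking functions of order `n` with exactly `k` runs. -/
def flatInsK (S : Multiset ℕ) (n k : ℕ) : Set (List ℕ) :=
  {w | IsInsertion S n w ∧ IsFlattened w ∧ numRuns w = k}

/-- `f(S; n, k)`, the number of flattened `S`-insertion parking functions of order `n`
with exactly `k` runs.  In particular `fS 0 n k` is the number of flattened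
permutations of `[n]` with `k` runs. -/
noncomputable def fS (S : Multiset ℕ) (n k : ℕ) : ℕ := (flatInsK S n k).ncard

end FlatPF
open FlatPF

lemma runs_ne_nil (w : List ℕ) : ∀ r ∈ runs w, r ≠ [] := by
  induction w with
  | nil => simp [runs]
  | cons a l ih =>
    rcases h : runs l with _ | ⟨r0, rs⟩
    · simp [runs, h]
    · rcases r0 with _ | ⟨b, t⟩
      · exact absurd (ih [] (h ▸ List.mem_cons_self)) (by simp)
      · simp only [runs, h]
        split
        · intro r hr
          rcases List.mem_cons.1 hr with hr | hr
          · subst hr; simp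
          · exact ih _ (h ▸ List.mem_cons_of_mem _ hr)
        · intro r hr
          rcases List.mem_cons.1 hr with hr | hr
          · subst hr; simp
          · exact ih _ (h ▸ hr)

lemma runs_chain (w : List ℕ) :
    List.Chain' (fun r s : List ℕ => ∀ x ∈ r.getLast?, ∀ y ∈ s.head?, y < x) (runs w) := by
  induction w with
  | nil => simp [runs, List.Chain']
  | cons a l ih =>
    rcases h : runs l with _ | ⟨r0, rs⟩
    · simp [runs, h, List.Chain']
    · rcases r0 with _ | ⟨b, t⟩
      · exact absurd (runs_ne_nil l [] (h ▸ List.mem_cons_self)) (by simp)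
      · rw [h] at ih
        simp only [runs, h]
        split
        · rw [List.Chain', List.isChain_cons] at ih ⊢
          refine ⟨?_, ih.2⟩
          intro s hs x hx y hy
          rw [List.getLast?_cons_cons] at hx
          exact ih.1 s hs x hx y hy
        · rw [List.Chain', List.isChain_cons]
          refine ⟨?_, ih⟩
          intro s hs x hx y hy
          simp only [List.head?_cons, Option.mem_def, Option.some.injEq] at hs
          subst hs
          simp only [List.getLast?_singleton, Option.mem_def, Option.some.injEq] at hx
          simp only [List.head?_cons, Option.mem_def, Option.some.injEq] at hy
          omega

open FlatPF in
/-- In a flattened parking function, every run except possibly the last has length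
at least `2`. -/
theorem stmt3 (w : List ℕ) (hpf : IsPF w) (hfl : IsFlattened w) :
    ∀ i : ℕ, i + 1 < (runs w).length → 2 ≤ ((runs w).getD i []).length := by
  intro i hi
  by_contra hlen
  push_neg at hlen
  have hi' : i < (runs w).length := by omega
  have hne : (runs w).getD i [] ≠ [] := by
    rw [List.getD_eq_getElem _ _ hi']
    exact runs_ne_nil w _ (List.getElem_mem _)
  rcases hr : (runs w).getD i [] with _ | ⟨x, r'⟩
  · exact hne hr
  · have hr' : r' = [] := by
      rw [hr] at hlen
      simp only [List.length_cons] at hlen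
      exact List.length_eq_zero_iff.mp (by omega)
    subst hr'
    rcases hs : (runs w).getD (i+1) [] with _ | ⟨y, s'⟩
    · exact runs_ne_nil w _ (by rw [← hs, List.getD_eq_getElem _ _ hi]; exact List.getElem_mem _) hs
    · -- descent: y < x
      have hchain := runs_chain w
      rw [List.Chain', List.isChain_iff_getElem] at hchain
      have hd := hchain i (by omega)
      rw [← List.getD_eq_getElem _ ([]) hi',
        ← List.getD_eq_getElem _ ([]) hi, hr, hs] at hd
      have hyx : y < x := hd x (by simp) y (by simp)
      -- flattened: x ≤ y
      unfold IsFlattened at hfl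
      rw [List.Chain', List.isChain_map, List.isChain_iff_getElem] at hfl
      have hf := hfl i (by omega)
      rw [← List.getD_eq_getElem _ ([]) hi',
        ← List.getD_eq_getElem _ ([]) hi, hr, hs] at hf
      simp at hf
      omega
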